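/- Fix k ≥ 1 and n ≥ 2, and consider the Algorithm 3 transition system restricted to steps (R1), (R2), (R3). Let the initial configuration c₀ have agent 0 in state (some s₀, some ρ₀, S) and every agent j ≠ 0 in state (some s_j, some ρ_j, u). Suppose c is reachable from c₀ using only steps (R1)–(R3), and in c exactly one agent has label S while every other agent has label ū. Then the S-labeled agent in c has secret some (∑_{j ∈ Fin n} s_j), the sum taken in ZMod k. -/
import Mathlib


/-- Labels of Algorithm 3. -/
inductive Alg3.Label : Type
  | S | S' | R | u | ubar
deriving DecidableEq

/-- Agent state of Algorithm 3: a secret, a mask, and a label. -/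
structure Alg3.AgentState (k : ℕ) : Type where
  secret : Option (ZMod k)
  mask : Option (ZMod k)
  label : Alg3.Label

/-- A configuration: the state of each of the `n` agents. -/
abbrev Alg3.Config (k n : ℕ) : Type := Fin n → Alg3.AgentState k

open Alg3 in
/-- A single step of Algorithm 3 restricted to the rules (R1), (R2), (R3), between a
distinct initiator `i` and responder `j`. -/
inductive Alg3.StepR (k n : ℕ) : Config k n → Config k n → Prop
  | r1 (c : Config k n) (i j : Fin n) (hij : i ≠ j) (σ : Option (ZMod k)) (r r' : ZMod k)
      (hi : c i = ⟨σ, some r, Label.S⟩) (hj : (c j).label = Label.ubar) :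
      StepR k n c (Function.update c i ⟨σ, some r', Label.S⟩)
  | r2 (c : Config k n) (i j : Fin n) (hij : i ≠ j) (μ r v : ZMod k) (ρj : Option (ZMod k))
      (hi : c i = ⟨some μ, some r, Label.S⟩) (hj : c j = ⟨some v, ρj, Label.u⟩) :
      StepR k n c (Function.update (Function.update c i ⟨none, some (μ - r), Label.S'⟩)
        j ⟨some (v + r), ρj, Label.R⟩)
  | r3 (c : Config k n) (i j : Fin n) (hij : i ≠ j) (x y : ZMod k) (ρj : Option (ZMod k))
      (hi : c i = ⟨none, some x, Label.S'⟩) (hj : c j = ⟨some y, ρj, Label.R⟩) :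
      StepR k n c (Function.update (Function.update c i ⟨none, none, Label.ubar⟩)
        j ⟨some (x + y), ρj, Label.S⟩)

/-- Reachability using only steps (R1)–(R3). -/
def Alg3.ReachableR (k n : ℕ) : Alg3.Config k n → Alg3.Config k n → Prop :=
  Relation.ReflTransGen (Alg3.StepR k n)


namespace Alg3
variable {k n : ℕ}

/-- Value contributed by an agent to the conserved sum. -/
def val (a : AgentState k) : ZMod k :=
  match a.label with
  | Label.S' => a.mask.getD 0
  | Label.ubar => 0
  | _ => a.secret.getD 0

lemma sum_update (c : Config k n) (i : Fin n) (a : AgentState k) :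
    ∑ x, val (Function.update c i a x) = ∑ x, val (c x) - val (c i) + val a := by
  have h : ∀ x, val (Function.update c i a x)
      = Function.update (fun x => val (c x)) i (val a) x := fun x =>
    Function.apply_update (fun _ z => val z) c i a x
  simp only [h]
  rw [Finset.sum_update_of_mem (Finset.mem_univ i), Finset.sdiff_singleton_eq_erase,
    ← Finset.add_sum_erase Finset.univ (fun x => val (c x)) (Finset.mem_univ i)]
  ring

/-- The invariant. -/
def Inv (s : Fin n → ZMod k) (c : Config k n) : Prop :=
  (∀ a, (c a).label = Label.S → (c a).secret.isSome) ∧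
    ∑ x, val (c x) = ∑ j, s j

lemma step_inv {s : Fin n → ZMod k} {c c' : Config k n}
    (h : StepR k n c c') (hc : Inv s c) : Inv s c' := by
  obtain ⟨hS, hsum⟩ := hc
  cases h with
  | r1 i j hij σ r r' hi hj =>
      constructor
      · intro a ha
        rcases eq_or_ne a i with rfl | hne
        · have := hS a (by rw [hi]); rw [hi] at this
          simpa using this
        · rw [Function.update_of_ne hne] at ha ⊢; exact hS a ha
      · rw [sum_update, hsum, hi]
        simp [val]
  | r2 i j hij μ r v ρj hi hj =>
      constructor
      · intro a ha
        rcases eq_or_ne a j with rfl | hnej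
        · simp
        · rw [Function.update_of_ne hnej] at ha ⊢
          rcases eq_or_ne a i with rfl | hnei
          · simp [val] at ha
          · rw [Function.update_of_ne hnei] at ha ⊢; exact hS a ha
      · rw [sum_update, sum_update, Function.update_of_ne (Ne.symm hij), hi, hj, hsum]
        simp only [val, Option.getD_some]
        ring
  | r3 i j hij x y ρj hi hj =>
      constructor
      · intro a ha
        rcases eq_or_ne a j with rfl | hnej
        · simp
        · rw [Function.update_of_ne hnej] at ha ⊢
          rcases eq_or_ne a i with rfl | hnei
          · simp [val] at ha
          · rw [Function.update_of_ne hnei] at ha ⊢; exact hS a ha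
      · rw [sum_update, sum_update, Function.update_of_ne (Ne.symm hij), hi, hj, hsum]
        simp only [val, Option.getD_some]
        ring

end Alg3

open Alg3 in
/-- If initially agent `0` is the Sender with secret `s 0` and every other agent `j` has
secret `s j` and label `u`, then in any configuration reachable via (R1)–(R3) in which
exactly one agent is labeled `S` and all others are labeled `ū`, the `S`-labeled agent's
secret is `some (∑ j, s j)`, the sum taken in `ZMod k`. -/
theorem stmt14 (k n : ℕ) (hk : 1 ≤ k) (hn : 2 ≤ n)
    (s ρ : Fin n → ZMod k) (c₀ c : Config k n)
    (lead : Fin n) (hlead : (lead : ℕ) = 0)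
    (h0 : c₀ lead = ⟨some (s lead), some (ρ lead), Label.S⟩)
    (hrest : ∀ j : Fin n, j ≠ lead → c₀ j = ⟨some (s j), some (ρ j), Label.u⟩)
    (hreach : ReachableR k n c₀ c)
    (i : Fin n) (hiS : (c i).label = Label.S)
    (hother : ∀ j : Fin n, j ≠ i → (c j).label = Label.ubar) :
    (c i).secret = some (∑ j : Fin n, s j) := by
  have hinv : Inv s c := by
    have h0inv : Inv s c₀ := by
      constructor
      · intro a ha
        rcases eq_or_ne a lead with rfl | hne
        · rw [h0]; rfl
        · rw [hrest a hne] at ha; exact absurd ha (by simp)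
      · refine Finset.sum_congr rfl fun x _ => ?_
        rcases eq_or_ne x lead with rfl | hne
        · rw [h0]; rfl
        · rw [hrest x hne]; rfl
    clear h0 hrest hiS hother
    induction hreach with
    | refl => exact h0inv
    | tail _ hstep ih => exact step_inv hstep ih
  obtain ⟨hS, hsum⟩ := hinv
  obtain ⟨m, hm⟩ := Option.isSome_iff_exists.mp (hS i hiS)
  have hsum2 : ∑ x, val (c x) = m := by
    rw [Finset.sum_eq_single i]
    · simp [val, hiS, hm]
    · intro b _ hb
      simp [val, hother b hb]
    · intro h; exact absurd (Finset.mem_univ i) h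
  rw [hm, hsum2.symm.trans hsum]
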